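/- For each j ∈ {1,2}, the right projection π_R : 𝒞_j → ℝ² × ℝ², ((s,x0,τ1,τ2), (x,ξ)) ↦ (x,ξ), is injective, and its image is exactly the set D = {((x1,x2),(ξ1,ξ2)) : 2 − r_m < x2 < 1, ξ2 ≠ 0}. (First part of the paper's main theorem on the toric section transform.) -/

import Mathlib

/-- The canonical relation `𝒞_j ⊆ ℝ⁴ × (ℝ² × ℝ²)` of the circle transform `T_j`
(`j ∈ {1,2}`), for scanning region `X = {2 − r_m < x2 < 1}`:
all pairs `((s, x0, (−1)^{j−1}σ(x1−x0), −σ((−1)^{j−1}s + x1 − x0)),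
((x1,x2), −σ((x1,x2) − c_j(s,x0))))` with `s > 0`, `σ ≠ 0` and
`(x1,x2) ∈ C_j(s,x0) ∩ X`, where `c_j(s,x0) = (x0 + (−1)^j s, 2)`. -/
def Crel (rm : ℝ) (j : ℕ) : Set ((ℝ × ℝ × ℝ × ℝ) × ((ℝ × ℝ) × (ℝ × ℝ))) :=
  {p | ∃ s x0 σ x1 x2 : ℝ, 0 < s ∧ σ ≠ 0 ∧
    (x1 - (x0 + (-1 : ℝ) ^ j * s)) ^ 2 + (x2 - 2) ^ 2 = s ^ 2 + 1 ∧
    2 - rm < x2 ∧ x2 < 1 ∧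
    p = ((s, x0, (-1 : ℝ) ^ (j - 1) * σ * (x1 - x0),
            -σ * ((-1 : ℝ) ^ (j - 1) * s + x1 - x0)),
         ((x1, x2), (-σ * (x1 - (x0 + (-1 : ℝ) ^ j * s)), -σ * (x2 - 2))))}

/-- Generalized canonical relation with `e = (−1)^j`, `e' = (−1)^{j−1}`. -/
def CrelE (rm e e' : ℝ) : Set ((ℝ × ℝ × ℝ × ℝ) × ((ℝ × ℝ) × (ℝ × ℝ))) :=
  {p | ∃ s x0 σ x1 x2 : ℝ, 0 < s ∧ σ ≠ 0 ∧
    (x1 - (x0 + e * s)) ^ 2 + (x2 - 2) ^ 2 = s ^ 2 + 1 ∧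
    2 - rm < x2 ∧ x2 < 1 ∧
    p = ((s, x0, e' * σ * (x1 - x0),
            -σ * (e' * s + x1 - x0)),
         ((x1, x2), (-σ * (x1 - (x0 + e * s)), -σ * (x2 - 2))))}

/-- The set `D = {((x1,x2),(ξ1,ξ2)) : 2 − r_m < x2 < 1, ξ2 ≠ 0}`. -/
def Dset (rm : ℝ) : Set ((ℝ × ℝ) × (ℝ × ℝ)) :=
  {v | 2 - rm < v.1.2 ∧ v.1.2 < 1 ∧ v.2.2 ≠ 0}

theorem keyL (rm e e' : ℝ) :
    (∀ p ∈ CrelE rm e e', ∀ q ∈ CrelE rm e e', p.2 = q.2 → p = q) ∧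
    Prod.snd '' CrelE rm e e' = Dset rm := by
  constructor
  · rintro p hp q hq hpq
    obtain ⟨s, x0, σ, x1, x2, hs, hσ, hc, hl, hu, rfl⟩ := hp
    obtain ⟨s', x0', σ', x1', x2', hs', hσ', hc', hl', hu', rfl⟩ := hq
    simp only [Prod.mk.injEq] at hpq ⊢
    obtain ⟨⟨hx1, hx2⟩, hξ1, hξ2⟩ := hpq
    subst hx1; subst hx2
    have h2 : x2 - 2 ≠ 0 := by intro h; nlinarith
    have hσσ : σ = σ' := mul_right_cancel₀ h2 (by linarith)
    subst hσσ
    have hA : x1 - (x0 + e * s) = x1 - (x0' + e * s') :=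
      mul_left_cancel₀ (neg_ne_zero.2 hσ) hξ1
    have hs2 : s ^ 2 = s' ^ 2 := by rw [hA] at hc; linarith
    have hss : s = s' := by nlinarith [hs2, hs, hs', sq_nonneg (s - s'), sq_nonneg (s + s')]
    subst hss
    have hx0 : x0 = x0' := by linarith
    subst hx0
    simp
  · ext ⟨⟨x1, x2⟩, ξ1, ξ2⟩
    simp only [Dset, Set.mem_setOf_eq]
    constructor
    · rintro ⟨p, hp, heq⟩
      obtain ⟨s, x0, σ, x1', x2', hs, hσ, hc, hl, hu, rfl⟩ := hp
      simp only [Prod.mk.injEq] at heq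
      obtain ⟨⟨hx1, hx2⟩, hξ1, hξ2⟩ := heq
      subst hx1; subst hx2; subst hξ1; subst hξ2
      exact ⟨hl, hu, mul_ne_zero (neg_ne_zero.2 hσ) (by intro h; nlinarith)⟩
    · rintro ⟨h1, h2, h3⟩
      have h20 : x2 - 2 ≠ 0 := by intro h; nlinarith
      set A : ℝ := ξ1 * (x2 - 2) / ξ2 with hA
      have hpos : 0 < A ^ 2 + (x2 - 2) ^ 2 - 1 := by
        nlinarith [sq_nonneg A, mul_pos (by linarith : (0:ℝ) < 1 - x2)
          (by linarith : (0:ℝ) < 3 - x2)]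
      set s : ℝ := Real.sqrt (A ^ 2 + (x2 - 2) ^ 2 - 1) with hsdef
      have hs : 0 < s := Real.sqrt_pos.2 hpos
      have hs2 : s ^ 2 = A ^ 2 + (x2 - 2) ^ 2 - 1 := Real.sq_sqrt hpos.le
      set σ : ℝ := -ξ2 / (x2 - 2) with hσdef
      have hσ : σ ≠ 0 := div_ne_zero (neg_ne_zero.2 h3) h20
      set x0 : ℝ := x1 - e * s - A with hx0
      have hkey : x1 - (x0 + e * s) = A := by rw [hx0]; ring
      refine ⟨((s, x0, e' * σ * (x1 - x0), -σ * (e' * s + x1 - x0)),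
        ((x1, x2), (-σ * (x1 - (x0 + e * s)), -σ * (x2 - 2)))),
        ⟨s, x0, σ, x1, x2, hs, hσ, by rw [hkey]; linarith, h1, h2, rfl⟩, ?_⟩
      have e1 : -σ * (x1 - (x0 + e * s)) = ξ1 := by
        rw [hkey, hσdef, hA]; field_simp
      have e2 : -σ * (x2 - 2) = ξ2 := by rw [hσdef]; field_simp
      rw [e1, e2]

/-- For each `j ∈ {1,2}`, the right projection `π_R : 𝒞_j → ℝ² × ℝ²` is injective, and
its image is exactly `D = {((x1,x2),(ξ1,ξ2)) : 2 − r_m < x2 < 1, ξ2 ≠ 0}`. -/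
theorem stmt5 (rm : ℝ) (hrm : 1 < rm) (j : ℕ) (hj : j ∈ ({1, 2} : Set ℕ)) :
    (∀ p ∈ Crel rm j, ∀ q ∈ Crel rm j, p.2 = q.2 → p = q) ∧
    Prod.snd '' Crel rm j = Dset rm :=
  keyL rm ((-1 : ℝ) ^ j) ((-1 : ℝ) ^ (j - 1))
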